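/- For p, q > 0 and m → 0⁺, sinh⁻¹((p·ω_q^m − q·ω_p^m)/m²) − (log p − log q) → 0; i.e. the rapidity difference of two positive-momentum particles converges to the difference of logarithms of their momenta as the mass tends to zero. -/

import Mathlib

open Filter

/-- For `p, q > 0`, the rapidity difference
`arsinh((p·ω_q^m − q·ω_p^m)/m²)` converges to `log p − log q` as `m → 0⁺`. -/
theorem rapidity_difference_massless_limit (p q : ℝ) (hp : 0 < p) (hq : 0 < q) :
    Tendsto
      (fun m : ℝ =>
        Real.arsinh ((p * Real.sqrt (q ^ 2 + m ^ 2) - q * Real.sqrt (p ^ 2 + m ^ 2)) / m ^ 2)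
          - (Real.log p - Real.log q))
      (nhdsWithin 0 (Set.Ioi 0)) (nhds 0) := by
  set L : ℝ := (p ^ 2 - q ^ 2) / (2 * (p * q)) with hL
  -- arsinh L = log p - log q
  have hpq : (0:ℝ) < p * q := mul_pos hp hq
  have harsinh : Real.arsinh L = Real.log p - Real.log q := by
    have h1 : (1 : ℝ) + L ^ 2 = ((p ^ 2 + q ^ 2) / (2 * (p * q))) ^ 2 := by
      rw [hL]
      field_simp
      ring
    have h2 : Real.sqrt (1 + L ^ 2) = (p ^ 2 + q ^ 2) / (2 * (p * q)) := by
      rw [h1, Real.sqrt_sq (by positivity)]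
    rw [Real.arsinh, h2]
    rw [show L + (p ^ 2 + q ^ 2) / (2 * (p * q)) = p / q by rw [hL]; field_simp; ring]
    exact Real.log_div hp.ne' hq.ne'
  -- the argument tends to L
  have hden : ∀ m : ℝ, 0 < p * Real.sqrt (q ^ 2 + m ^ 2) + q * Real.sqrt (p ^ 2 + m ^ 2) := by
    intro m
    have h1 : 0 < Real.sqrt (q ^ 2 + m ^ 2) := Real.sqrt_pos.2 (by positivity)
    have h2 : 0 < Real.sqrt (p ^ 2 + m ^ 2) := Real.sqrt_pos.2 (by positivity)
    positivity
  have hkey : ∀ m : ℝ, 0 < m →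
      (p * Real.sqrt (q ^ 2 + m ^ 2) - q * Real.sqrt (p ^ 2 + m ^ 2)) / m ^ 2
        = (p ^ 2 - q ^ 2) / (p * Real.sqrt (q ^ 2 + m ^ 2) + q * Real.sqrt (p ^ 2 + m ^ 2)) := by
    intro m hm
    have hA : Real.sqrt (q ^ 2 + m ^ 2) ^ 2 = q ^ 2 + m ^ 2 := Real.sq_sqrt (by positivity)
    have hB : Real.sqrt (p ^ 2 + m ^ 2) ^ 2 = p ^ 2 + m ^ 2 := Real.sq_sqrt (by positivity)
    rw [div_eq_div_iff (by positivity) (hden m).ne']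
    nlinarith [hA, hB]
  have htend : Tendsto
      (fun m : ℝ => (p ^ 2 - q ^ 2) / (p * Real.sqrt (q ^ 2 + m ^ 2) + q * Real.sqrt (p ^ 2 + m ^ 2)))
      (nhdsWithin 0 (Set.Ioi 0)) (nhds L) := by
    have hc : ContinuousAt
        (fun m : ℝ => (p ^ 2 - q ^ 2) / (p * Real.sqrt (q ^ 2 + m ^ 2) + q * Real.sqrt (p ^ 2 + m ^ 2)))
        0 := by
      apply ContinuousAt.div
      · fun_prop
      · fun_prop
      · exact (hden 0).ne'
    have h0 : L = (p ^ 2 - q ^ 2) /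
        (p * Real.sqrt (q ^ 2 + (0:ℝ) ^ 2) + q * Real.sqrt (p ^ 2 + (0:ℝ) ^ 2)) := by
      rw [hL]
      norm_num
      rw [Real.sqrt_sq hq.le, Real.sqrt_sq hp.le]
      ring_nf
    rw [h0]
    exact hc.continuousWithinAt
  have harg : Tendsto
      (fun m : ℝ => (p * Real.sqrt (q ^ 2 + m ^ 2) - q * Real.sqrt (p ^ 2 + m ^ 2)) / m ^ 2)
      (nhdsWithin 0 (Set.Ioi 0)) (nhds L) := by
    refine htend.congr' ?_
    filter_upwards [self_mem_nhdsWithin] with m hm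
    exact (hkey m hm).symm
  have := (Real.continuous_arsinh.continuousAt.tendsto.comp harg).sub_const
    (Real.log p - Real.log q)
  rw [harsinh, sub_self] at this
  exact this
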